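/- Let G be a finite group and H, K ≤ G subgroups. Then the Mackey formula holds in Burnside rings: for every y ∈ B(H), Res^G_K(Ind^G_H(y)) = Σ_{g ∈ K\G/H} Ind^K_{K ∩ gHg⁻¹}(Res^{gHg⁻¹}_{K ∩ gHg⁻¹}(c_g(y))), where the sum is over a set of representatives of (K,H)-double cosets and c_g: B(H) → B(gHg⁻¹) is the conjugation isomorphism. -/

import Mathlib

open Pointwise Finsupp

noncomputable section

/-- Conjugacy classes of subgroups of `G`. -/
def SubgroupConj (G : Type*) [Group G] : Type _ :=
  Quotient (MulAction.orbitRel (ConjAct G) (Subgroup G))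

variable {G : Type*} [Group G]

/-- The conjugacy class of a subgroup. -/
def Subgroup.toConj (K : Subgroup G) : SubgroupConj G :=
  Quotient.mk (MulAction.orbitRel (ConjAct G) (Subgroup G)) K

/-- A representative of a conjugacy class of subgroups. -/
def SubgroupConj.rep (c : SubgroupConj G) : Subgroup G := Quotient.out c

instance : DecidableEq (SubgroupConj G) := Classical.decEq _

instance [Finite G] : Finite (Subgroup G) :=
  Finite.of_injective (fun H => (H : Set G)) fun _ _ h => SetLike.ext' h

instance [Finite G] : Finite (SubgroupConj G) := Quotient.finite _

noncomputable instance [Finite G] : Fintype (SubgroupConj G) := Fintype.ofFinite _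

instance [Finite G] (s t : Set G) : Finite (DoubleCoset.Quotient s t) :=
  Quotient.finite _

noncomputable instance [Finite G] (s t : Set G) : Fintype (DoubleCoset.Quotient s t) :=
  Fintype.ofFinite _

/-- The conjugate subgroup `g K g⁻¹`. -/
def conjSub (g : G) (K : Subgroup G) : Subgroup G :=
  Subgroup.map (MulAut.conj g).toMonoidHom K

/-- The rational Burnside ring of `G`, as the free `ℚ`-module on the classes `[G/Γ]`. -/
abbrev BQ (G : Type*) [Group G] := SubgroupConj G →₀ ℚ

variable [Finite G]

/-- The double coset formula for the product of two basis elements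
`⟨Γ⟩⟨Γ'⟩ = Σ_{g ∈ Γ'\G\Γ} ⟨Γ ∩ g⁻¹ Γ' g⟩`. -/
def basisMul (c d : SubgroupConj G) : BQ G :=
  ∑ q : DoubleCoset.Quotient (d.rep : Set G) (c.rep : Set G),
    Finsupp.single (Subgroup.toConj (c.rep ⊓ conjSub (Quotient.out q)⁻¹ d.rep)) 1

/-- The multiplication of the Burnside ring in the basis `[G/Γ]`. -/
def mulB (x y : BQ G) : BQ G :=
  x.sum fun c a => y.sum fun d b => (a * b) • basisMul c d

/-- The unit `[G/G]` of the Burnside ring. -/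
def oneB : BQ G := Finsupp.single (Subgroup.toConj (⊤ : Subgroup G)) 1

/-- Induction along an (injective) group homomorphism. -/
def indF {H : Type*} [Group H] (f : H →* G) (y : BQ H) : BQ G :=
  y.sum fun c a => Finsupp.single (Subgroup.toConj (c.rep.map f)) a

/-- Restriction of the basis element `[G/Γ]` along `f : H →* G`:
`Res [G/Γ] = Σ_{g ∈ f(H)\G/Γ} [H / f⁻¹(g Γ g⁻¹)]`. -/
def resBasis {H : Type*} [Group H] (f : H →* G) (c : SubgroupConj G) : BQ H :=
  ∑ q : DoubleCoset.Quotient (f.range : Set G) (c.rep : Set G),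
    Finsupp.single (Subgroup.toConj ((conjSub (Quotient.out q) c.rep).comap f)) 1

/-- Restriction along a group homomorphism. -/
def resF {H : Type*} [Group H] (f : H →* G) (x : BQ G) : BQ H :=
  x.sum fun c a => a • resBasis f c

/-- The mark of the basis element `[G/Γ]` at (the class of) `Δ`: the number of
`Δ`-fixed points of `G/Γ`. -/
def markBasis (c d : SubgroupConj G) : ℚ :=
  (Nat.card {x : G ⧸ c.rep // ∀ k ∈ d.rep, k • x = x} : ℚ)

/-- The mark homomorphism, in the basis `[G/Γ]`. -/
def markMap (x : BQ G) : SubgroupConj G → ℚ :=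
  fun d => x.sum fun c a => a * markBasis c d

/-- `x` is the primitive idempotent of `B(G) ⊗ ℚ` supported at the full subgroup:
its mark at `G` is `1` and its marks at all proper subgroups vanish. -/
def IsTopIdem (x : BQ G) : Prop :=
  markMap x = fun d => if d = Subgroup.toConj (⊤ : Subgroup G) then 1 else 0

/-- `|N_G(H)/H|`. -/
def nuG (H : Subgroup G) : ℕ :=
  Nat.card (Subgroup.normalizer (H : Set G) ⧸ H.subgroupOf (Subgroup.normalizer (H : Set G)))


/-- The conjugation isomorphism `H → gHg⁻¹`, as a monoid homomorphism. -/
def conjHom (g : G) (H : Subgroup G) : ↥H →* ↥(conjSub g H) :=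
  ((MulAut.conj g).toMonoidHom.comp H.subtype).codRestrict (conjSub g H)
    (fun h => Subgroup.mem_map_of_mem _ h.2)

/-- Conjugation by an element of the normalizer of `H`, as an endomorphism of `H`. -/
def normConjHom (H : Subgroup G) (n : G) (hn : n ∈ Subgroup.normalizer (H : Set G)) : ↥H →* ↥H :=
  ((MulAut.conj n).toMonoidHom.comp H.subtype).codRestrict H
    (fun h => by simpa using (Subgroup.mem_normalizer_iff.mp hn ↑h).mp h.2)

section AuxBasic

variable {G₁ : Type*} [Group G₁] {G₂ : Type*} [Group G₂]

theorem mem_conjSub' {g x : G₁} {L : Subgroup G₁} :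
    x ∈ conjSub g L ↔ ∃ y ∈ L, g * y * g⁻¹ = x := by
  simp only [conjSub, Subgroup.mem_map, MulEquiv.coe_toMonoidHom, MulAut.conj_apply]

theorem mem_conjSub {g x : G₁} {L : Subgroup G₁} :
    x ∈ conjSub g L ↔ g⁻¹ * x * g ∈ L := by
  rw [mem_conjSub']
  constructor
  · rintro ⟨y, hy, rfl⟩
    have e : g⁻¹ * (g * y * g⁻¹) * g = y := by group
    rwa [e]
  · intro h
    exact ⟨g⁻¹ * x * g, h, by group⟩

theorem conjSub_conjSub (a b : G₁) (L : Subgroup G₁) :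
    conjSub a (conjSub b L) = conjSub (a * b) L := by
  ext x
  simp [mem_conjSub, mul_inv_rev, mul_assoc]

theorem conjSub_self_of_mem {g : G₁} {L : Subgroup G₁} (hg : g ∈ L) :
    conjSub g L = L := by
  ext x
  rw [mem_conjSub]
  constructor
  · intro h
    have := L.mul_mem (L.mul_mem hg h) (L.inv_mem hg)
    have e : g * (g⁻¹ * x * g) * g⁻¹ = x := by group
    rwa [e] at this
  · intro h
    exact L.mul_mem (L.mul_mem (L.inv_mem hg) h) hg

theorem conjSub_le_conjSub {g : G₁} {L L' : Subgroup G₁} (h : L ≤ L') :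
    conjSub g L ≤ conjSub g L' := by
  intro x hx
  rw [mem_conjSub] at hx ⊢
  exact h hx

theorem map_conjSub (f : G₁ →* G₂) (u : G₁) (L : Subgroup G₁) :
    (conjSub u L).map f = conjSub (f u) (L.map f) := by
  ext x
  simp only [Subgroup.mem_map, mem_conjSub']
  constructor
  · rintro ⟨y, ⟨z, hz, rfl⟩, rfl⟩
    exact ⟨f z, ⟨z, hz, rfl⟩, by simp [map_mul, map_inv]⟩
  · rintro ⟨y, ⟨z, hz, rfl⟩, rfl⟩
    exact ⟨u * z * u⁻¹, ⟨z, hz, rfl⟩, by simp [map_mul, map_inv]⟩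

theorem comap_conjSub (f : G₁ →* G₂) (u : G₁) (L : Subgroup G₂) :
    (conjSub (f u) L).comap f = conjSub u (L.comap f) := by
  ext x
  simp [mem_conjSub, Subgroup.mem_comap, map_mul, map_inv, mul_assoc]

theorem toConj_conjSub (g : G₁) (L : Subgroup G₁) :
    (conjSub g L).toConj = L.toConj := by
  apply Quotient.sound
  refine ⟨ConjAct.toConjAct g, ?_⟩
  ext x
  rw [Subgroup.mem_pointwise_smul_iff_inv_smul_mem, mem_conjSub, ConjAct.smul_def]
  simp [mul_assoc]

theorem toConj_rep (c : SubgroupConj G₁) : c.rep.toConj = c := Quotient.out_eq c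

theorem rep_toConj (L : Subgroup G₁) : ∃ x : G₁, L.toConj.rep = conjSub x L := by
  have h : (MulAction.orbitRel (ConjAct G₁) (Subgroup G₁)).r L.toConj.rep L :=
    Quotient.exact (Quotient.out_eq _)
  obtain ⟨a, ha⟩ := h
  refine ⟨ConjAct.ofConjAct a, ?_⟩
  rw [← ha]
  ext x
  rw [Subgroup.mem_pointwise_smul_iff_inv_smul_mem, mem_conjSub, ConjAct.smul_def]
  simp [mul_assoc]

theorem toConj_rep_map (f : G₁ →* G₂) (L : Subgroup G₁) :
    (L.toConj.rep.map f).toConj = (L.map f).toConj := by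
  obtain ⟨x, hx⟩ := rep_toConj L
  rw [hx, map_conjSub, toConj_conjSub]

end AuxBasic
section AuxDoset

theorem dosetSum_bij {G₁ : Type*} [Group G₁] [Finite G₁] {G₂ : Type*} [Group G₂] [Finite G₂]
    {β : Type*} [AddCommMonoid β]
    (s t : Subgroup G₁) (s' t' : Subgroup G₂) (φ : G₁ → G₂)
    (f : G₁ → β) (g : G₂ → β)
    (hrel : ∀ a b : G₁,
      DoubleCoset.mk s t a = DoubleCoset.mk s t b ↔ DoubleCoset.mk s' t' (φ a) = DoubleCoset.mk s' t' (φ b))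
    (hsurj : ∀ b : G₂, ∃ a : G₁, DoubleCoset.mk s' t' (φ a) = DoubleCoset.mk s' t' b)
    (hg : ∀ a b : G₂, DoubleCoset.mk s' t' a = DoubleCoset.mk s' t' b → g a = g b)
    (hfg : ∀ a, f a = g (φ a)) :
    ∑ q : DoubleCoset.Quotient (s : Set G₁) (t : Set G₁), f (Quotient.out q)
      = ∑ q : DoubleCoset.Quotient (s' : Set G₂) (t' : Set G₂), g (Quotient.out q) := by
  let Φ : DoubleCoset.Quotient (s : Set G₁) (t : Set G₁) → DoubleCoset.Quotient (s' : Set G₂) (t' : Set G₂) :=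
    Quotient.lift (fun a => DoubleCoset.mk s' t' (φ a))
      (fun a b h => (hrel a b).mp (Quotient.sound h))
  have hΦmk : ∀ a : G₁, Φ (DoubleCoset.mk s t a) = DoubleCoset.mk s' t' (φ a) := fun a => rfl
  have hbij : Function.Bijective Φ := by
    constructor
    · intro q q'
      induction q using Quotient.inductionOn with
      | h a =>
        induction q' using Quotient.inductionOn with
        | h b =>
          intro h
          exact (hrel a b).mpr h
    · intro b
      induction b using Quotient.inductionOn with
      | h b0 =>
        obtain ⟨a, ha⟩ := hsurj b0
        exact ⟨DoubleCoset.mk s t a, ha⟩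
  refine Fintype.sum_bijective Φ hbij _ _ (fun q => ?_)
  rw [hfg]
  refine hg _ _ ?_
  have h1 : Φ q = DoubleCoset.mk s' t' (φ (Quotient.out q)) := by
    conv_lhs => rw [← DoubleCoset.out_eq' _ _ q]
    exact hΦmk _
  rw [← h1, DoubleCoset.out_eq']

theorem mackey_core {G : Type*} [Group G] [Finite G] (K H A : Subgroup G) (hA : A ≤ H)
    {β : Type*} [AddCommMonoid β] (f : G → β)
    (hf : ∀ a b : G, DoubleCoset.mk K A a = DoubleCoset.mk K A b → f a = f b)
    (S B : (q : DoubleCoset.Quotient (K : Set G) (H : Set G)) → Subgroup ↥(conjSub (Quotient.out q) H))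
    (hS : ∀ q m, m ∈ S q ↔ (m : G) ∈ K)
    (hB : ∀ q m, m ∈ B q ↔ (m : G) ∈ conjSub (Quotient.out q) A) :
    (∑ q : DoubleCoset.Quotient (K : Set G) (H : Set G),
        ∑ r : DoubleCoset.Quotient (S q : Set (conjSub (Quotient.out q) H)) (B q : Set _),
          f ((Quotient.out r : conjSub (Quotient.out q) H) * Quotient.out q))
      = ∑ q : DoubleCoset.Quotient (K : Set G) (A : Set G), f (Quotient.out q) := by
  rw [Finset.sum_sigma']
  rw [Finset.univ_sigma_univ]
  set Φ : (Σ q : DoubleCoset.Quotient (K : Set G) (H : Set G),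
      DoubleCoset.Quotient (S q : Set (conjSub (Quotient.out q) H)) (B q : Set _)) →
      DoubleCoset.Quotient (K : Set G) (A : Set G) :=
    fun p => DoubleCoset.mk K A ((Quotient.out p.2 : conjSub (Quotient.out p.1) H) * Quotient.out p.1)
    with hΦ
  have hbij : Function.Bijective Φ := by
    constructor
    · rintro ⟨q, r⟩ ⟨q', r'⟩ h
      obtain ⟨k, hk, γ, hγ, heq⟩ := (DoubleCoset.eq K A _ _).mp h
      -- notation
      set g := Quotient.out q with hgdef
      set g' := Quotient.out q' with hg'def
      have hrM : ((Quotient.out r : conjSub g H) : G) ∈ conjSub g H := (Quotient.out r).2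
      have hr'M : ((Quotient.out r' : conjSub g' H) : G) ∈ conjSub g' H := (Quotient.out r').2
      have hrH : g⁻¹ * ((Quotient.out r : conjSub g H) : G) * g ∈ H := mem_conjSub.mp hrM
      have hr'H : g'⁻¹ * ((Quotient.out r' : conjSub g' H) : G) * g' ∈ H := mem_conjSub.mp hr'M
      set x : G := ((Quotient.out r : conjSub g H) : G)
      set x' : G := ((Quotient.out r' : conjSub g' H) : G)
      -- step 1 : q = q'
      have hqq' : q = q' := by
        have e2 : g' = k * g * ((g⁻¹ * x * g) * γ * (g'⁻¹ * x' * g')⁻¹) := by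
          have e3 : x' * g' = k * (x * g) * γ := heq
          calc g' = (x' * g') * g'⁻¹ * x'⁻¹ * g' := by group
          _ = (k * (x * g) * γ) * g'⁻¹ * x'⁻¹ * g' := by rw [e3]
          _ = k * g * ((g⁻¹ * x * g) * γ * (g'⁻¹ * x' * g')⁻¹) := by group
        have hmem : (g⁻¹ * x * g) * γ * (g'⁻¹ * x' * g')⁻¹ ∈ H :=
          H.mul_mem (H.mul_mem hrH (hA hγ)) (H.inv_mem hr'H)
        have : DoubleCoset.mk K H g = DoubleCoset.mk K H g' :=
          (DoubleCoset.eq K H g g').mpr ⟨k, hk, _, hmem, e2⟩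
        rw [hgdef, hg'def, DoubleCoset.out_eq', DoubleCoset.out_eq'] at this
        exact this
      subst hqq'
      -- step 2 : r = r'
      have hw : g * γ * g⁻¹ ∈ conjSub g H := by
        rw [mem_conjSub]
        have e : g⁻¹ * (g * γ * g⁻¹) * g = γ := by group
        rw [e]; exact hA hγ
      have hwA : g * γ * g⁻¹ ∈ conjSub g A := by
        rw [mem_conjSub]
        have e : g⁻¹ * (g * γ * g⁻¹) * g = γ := by group
        rw [e]; exact hγ
      have e2 : x' = k * x * (g * γ * g⁻¹) := by
        calc x' = x' * g * g⁻¹ := by group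
        _ = k * (x * g) * γ * g⁻¹ := by rw [heq]
        _ = k * x * (g * γ * g⁻¹) := by group
      have hkM : k ∈ conjSub g H := by
        have e3 : k = x' * (g * γ * g⁻¹)⁻¹ * x⁻¹ := by rw [e2]; group
        rw [e3]
        exact Subgroup.mul_mem _ (Subgroup.mul_mem _ hr'M (Subgroup.inv_mem _ hw))
          (Subgroup.inv_mem _ hrM)
      have hrr' : r = r' := by
        have emul : Quotient.out r' = ⟨k, hkM⟩ * Quotient.out r * ⟨g * γ * g⁻¹, hw⟩ := by
          apply Subtype.ext
          push_cast
          exact e2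
        have : DoubleCoset.mk (S q) (B q) (Quotient.out r) = DoubleCoset.mk (S q) (B q) (Quotient.out r') :=
          (DoubleCoset.eq _ _ _ _).mpr ⟨⟨k, hkM⟩, (hS q _).mpr hk, ⟨g * γ * g⁻¹, hw⟩, (hB q _).mpr hwA,
            emul⟩
        rwa [DoubleCoset.out_eq', DoubleCoset.out_eq'] at this
      rw [hrr']
    · intro b
      set a := Quotient.out b with hadef
      set q := DoubleCoset.mk K H a with hqdef
      set g := Quotient.out q with hgdef
      have hmk : DoubleCoset.mk K H a = DoubleCoset.mk K H g := by rw [hgdef, hqdef, DoubleCoset.out_eq']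
      obtain ⟨k, hk, h, hh, hge⟩ := (DoubleCoset.eq K H a g).mp hmk
      have hmM : g * h⁻¹ * g⁻¹ ∈ conjSub g H := by
        rw [mem_conjSub]
        have e : g⁻¹ * (g * h⁻¹ * g⁻¹) * g = h⁻¹ := by group
        rw [e]; exact H.inv_mem hh
      set m : conjSub g H := ⟨g * h⁻¹ * g⁻¹, hmM⟩ with hmdef
      set r := DoubleCoset.mk (S q) (B q) m with hrdef
      refine ⟨⟨q, r⟩, ?_⟩
      have hmk2 : DoubleCoset.mk (S q) (B q) m = DoubleCoset.mk (S q) (B q) (Quotient.out r) := by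
        rw [hrdef, DoubleCoset.out_eq']
      obtain ⟨σ, hσ, w, hw, hre⟩ := (DoubleCoset.eq _ _ m (Quotient.out r)).mp hmk2
      have hσK : (σ : G) ∈ K := (hS q σ).mp hσ
      have hwA : (w : G) ∈ conjSub g A := (hB q w).mp hw
      obtain ⟨γ, hγ, hγe⟩ := mem_conjSub'.mp hwA
      have hcoe : ((Quotient.out r : conjSub g H) : G)
          = (σ : G) * (g * h⁻¹ * g⁻¹) * (g * γ * g⁻¹) := by
        rw [hre]
        push_cast
        rw [← hγe]
      show DoubleCoset.mk K A (((Quotient.out r : conjSub g H) : G) * g) = b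
      have : DoubleCoset.mk K A a = DoubleCoset.mk K A (((Quotient.out r : conjSub g H) : G) * g) := by
        refine (DoubleCoset.eq K A _ _).mpr ⟨(σ : G) * k, K.mul_mem hσK hk, γ, hγ, ?_⟩
        rw [hcoe]
        have key : ∀ s0 gg k0 a0 h0 γ0 : G, gg = k0 * a0 * h0 →
            s0 * (gg * h0⁻¹ * gg⁻¹) * (gg * γ0 * gg⁻¹) * gg = s0 * k0 * a0 * γ0 := by
          intro s0 gg k0 a0 h0 γ0 hgg
          subst hgg
          group
        exact key _ _ _ _ _ _ hge
      rw [← this, hadef, DoubleCoset.out_eq']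
  refine Fintype.sum_bijective Φ hbij _ _ (fun p => ?_)
  exact hf _ _ (DoubleCoset.out_eq' K A (Φ p)).symm

end AuxDoset
section AuxGlue

variable {G : Type*} [Group G]

theorem fK_const (K A : Subgroup G) (a b : G)
    (h : DoubleCoset.mk K A a = DoubleCoset.mk K A b) :
    ((conjSub a A).comap K.subtype).toConj = ((conjSub b A).comap K.subtype).toConj := by
  obtain ⟨k, hk, γ, hγ, rfl⟩ := (DoubleCoset.eq K A a b).mp h
  have e1 : conjSub (k * a * γ) A = conjSub k (conjSub a A) := by
    rw [conjSub_conjSub]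
    conv_rhs => rw [← conjSub_self_of_mem hγ]
    rw [conjSub_conjSub]
  have e2 : (conjSub (K.subtype ⟨k, hk⟩) (conjSub a A)).comap K.subtype
      = conjSub ⟨k, hk⟩ ((conjSub a A).comap K.subtype) := comap_conjSub K.subtype _ _
  have e3 : K.subtype ⟨k, hk⟩ = k := rfl
  rw [e1, ← e3, e2, toConj_conjSub]

theorem coe_conjHom (g : G) (H : Subgroup G) (γ : H) :
    ((conjHom g H γ : conjSub g H) : G) = g * (γ : G) * g⁻¹ := rfl

theorem mem_inclusion_range {K M : Subgroup G} (h : K ⊓ M ≤ M) (m : M) :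
    m ∈ (Subgroup.inclusion h).range ↔ (m : G) ∈ K := by
  constructor
  · rintro ⟨w, rfl⟩
    exact w.2.1
  · intro hm
    exact ⟨⟨(m : G), hm, m.2⟩, rfl⟩

theorem mem_map_conjHom (g : G) (H : Subgroup G) (Γ : Subgroup H)
    (m : conjSub g H) :
    m ∈ Γ.map (conjHom g H) ↔ (m : G) ∈ conjSub g (Γ.map H.subtype) := by
  rw [mem_conjSub']
  simp only [Subgroup.mem_map]
  constructor
  · rintro ⟨γ, hγ, rfl⟩
    exact ⟨(γ : G), ⟨γ, hγ, rfl⟩, rfl⟩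
  · rintro ⟨z, ⟨γ, hγ, rfl⟩, hz⟩
    refine ⟨γ, hγ, ?_⟩
    apply Subtype.ext
    rw [coe_conjHom]
    exact hz

theorem value_lemma (K H : Subgroup G) (g : G) (Γ : Subgroup H) (m : conjSub g H) :
    ((conjSub m (Γ.map (conjHom g H))).comap
        (Subgroup.inclusion (inf_le_right : K ⊓ conjSub g H ≤ conjSub g H))).map
      (Subgroup.inclusion (inf_le_left : K ⊓ conjSub g H ≤ K))
      = (conjSub ((m : G) * g) (Γ.map H.subtype)).comap K.subtype := by
  ext x
  simp only [Subgroup.mem_map, Subgroup.mem_comap, Subgroup.coe_subtype]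
  constructor
  · rintro ⟨w, hw, rfl⟩
    rw [mem_conjSub] at hw
    obtain ⟨γ, hγ, hγe⟩ := hw
    rw [mem_conjSub']
    refine ⟨(γ : G), ⟨γ, hγ, rfl⟩, ?_⟩
    have hc : ((m⁻¹ * Subgroup.inclusion inf_le_right w * m : conjSub g H) : G)
        = g * (γ : G) * g⁻¹ := by rw [← hγe, coe_conjHom]
    push_cast at hc
    rw [Subgroup.coe_inclusion]
    rw [Subgroup.coe_inclusion] at hc
    calc (m : G) * g * (γ : G) * ((m : G) * g)⁻¹
        = (m : G) * (g * (γ : G) * g⁻¹) * (m : G)⁻¹ := by group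
    _ = (m : G) * ((m : G)⁻¹ * (w : G) * (m : G)) * (m : G)⁻¹ := by rw [← hc]
    _ = (w : G) := by group
  · intro hx
    rw [mem_conjSub'] at hx
    obtain ⟨z, ⟨γ, hγ, rfl⟩, hz⟩ := hx
    simp only [Subgroup.coe_subtype] at hz
    have hgγM : g * (γ : G) * g⁻¹ ∈ conjSub g H := by
      rw [mem_conjSub]
      have e : g⁻¹ * (g * (γ : G) * g⁻¹) * g = (γ : G) := by group
      rw [e]; exact γ.2
    have hxM : (x : G) ∈ conjSub g H := by
      have e : (x : G) = (m : G) * (g * (γ : G) * g⁻¹) * (m : G)⁻¹ := by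
        rw [← hz]; group
      rw [e]
      exact Subgroup.mul_mem _ (Subgroup.mul_mem _ m.2 hgγM) (Subgroup.inv_mem _ m.2)
    refine ⟨⟨(x : G), x.2, hxM⟩, ?_, rfl⟩
    rw [mem_conjSub]
    have : (m⁻¹ * Subgroup.inclusion (inf_le_right : K ⊓ conjSub g H ≤ conjSub g H)
        ⟨(x : G), x.2, hxM⟩ * m : conjSub g H) = conjHom g H γ := by
      apply Subtype.ext
      rw [coe_conjHom]
      push_cast
      rw [Subgroup.coe_inclusion, ← hz]
      group
    rw [this]
    exact Subgroup.mem_map_of_mem _ hγ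

end AuxGlue
section AuxAlg

variable {G : Type*} [Group G] [Finite G] {H : Type*} [Group H] [Finite H]

theorem indF_eq_mapDomain (f : H →* G) (y : BQ H) :
    indF f y = Finsupp.mapDomain (fun c : SubgroupConj H => (c.rep.map f).toConj) y := rfl

theorem indF_zero (f : H →* G) : indF f (0 : BQ H) = 0 := by
  rw [indF_eq_mapDomain, Finsupp.mapDomain_zero]

theorem indF_add (f : H →* G) (y z : BQ H) : indF f (y + z) = indF f y + indF f z := by
  rw [indF_eq_mapDomain, indF_eq_mapDomain, indF_eq_mapDomain, Finsupp.mapDomain_add]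

theorem indF_smul (f : H →* G) (a : ℚ) (y : BQ H) : indF f (a • y) = a • indF f y := by
  rw [indF_eq_mapDomain, indF_eq_mapDomain, Finsupp.mapDomain_smul]

theorem indF_single (f : H →* G) (c : SubgroupConj H) (a : ℚ) :
    indF f (Finsupp.single c a) = Finsupp.single ((c.rep.map f).toConj) a := by
  rw [indF_eq_mapDomain, Finsupp.mapDomain_single]

theorem indF_finset_sum {ι : Type*} (f : H →* G) (s : Finset ι) (v : ι → BQ H) :
    indF f (∑ i ∈ s, v i) = ∑ i ∈ s, indF f (v i) := by
  simp only [indF_eq_mapDomain, Finsupp.mapDomain_finset_sum]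

theorem resF_zero (f : H →* G) : resF f (0 : BQ G) = 0 := by
  simp [resF, Finsupp.sum_zero_index]

theorem resF_add (f : H →* G) (y z : BQ G) : resF f (y + z) = resF f y + resF f z :=
  Finsupp.sum_add_index' (fun c => zero_smul ℚ (resBasis f c))
    (fun c a b => add_smul a b (resBasis f c))

theorem resF_single (f : H →* G) (c : SubgroupConj G) (a : ℚ) :
    resF f (Finsupp.single c a) = a • resBasis f c :=
  Finsupp.sum_single_index (zero_smul ℚ (resBasis f c))

end AuxAlg

section AuxResBasis

variable {G : Type*} [Group G] [Finite G]

theorem resBasis_subtype (K Δ : Subgroup G) :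
    resBasis K.subtype Δ.toConj =
      ∑ q : DoubleCoset.Quotient (K : Set G) (Δ : Set G),
        Finsupp.single (((conjSub (Quotient.out q) Δ).comap K.subtype).toConj) (1 : ℚ) := by
  obtain ⟨x, hx⟩ := rep_toConj Δ
  unfold resBasis
  refine dosetSum_bij K.subtype.range Δ.toConj.rep K Δ (fun a => a * x)
    (fun a => Finsupp.single (((conjSub a Δ.toConj.rep).comap K.subtype).toConj) (1 : ℚ))
    (fun a => Finsupp.single (((conjSub a Δ).comap K.subtype).toConj) (1 : ℚ))
    ?_ ?_ ?_ ?_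
  · intro a b
    rw [DoubleCoset.eq, DoubleCoset.eq]
    constructor
    · rintro ⟨k, hk, γ, hγ, rfl⟩
      rw [Subgroup.range_subtype] at hk
      rw [hx, mem_conjSub] at hγ
      exact ⟨k, hk, x⁻¹ * γ * x, hγ, by group⟩
    · rintro ⟨k, hk, δ, hδ, heq⟩
      rw [← Subgroup.range_subtype K] at hk
      have hδ' : x * δ * x⁻¹ ∈ Δ.toConj.rep := by
        rw [hx, mem_conjSub]
        have e : x⁻¹ * (x * δ * x⁻¹) * x = δ := by group
        rw [e]; exact hδ
      refine ⟨k, hk, x * δ * x⁻¹, hδ', ?_⟩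
      calc b = (b * x) * x⁻¹ := by group
      _ = (k * (a * x) * δ) * x⁻¹ := by rw [heq]
      _ = k * a * (x * δ * x⁻¹) := by group
  · intro b
    exact ⟨b * x⁻¹, by rw [inv_mul_cancel_right]⟩
  · intro a b h
    exact congrArg (fun t => Finsupp.single t (1 : ℚ)) (fK_const K Δ a b h)
  · intro a
    rw [hx, conjSub_conjSub]

end AuxResBasis
section AuxTerm

variable {G : Type*} [Group G] [Finite G]

theorem rhs_term (H K : Subgroup G) (g : G) (c : SubgroupConj ↥H) (a : ℚ) :
    indF (Subgroup.inclusion (inf_le_left : K ⊓ conjSub g H ≤ K))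
      (resF (Subgroup.inclusion (inf_le_right : K ⊓ conjSub g H ≤ conjSub g H))
        (indF (conjHom g H) (Finsupp.single c a)))
      = a • ∑ r : DoubleCoset.Quotient
            (((Subgroup.inclusion (inf_le_right : K ⊓ conjSub g H ≤ conjSub g H)).range :
                Subgroup (conjSub g H)) : Set (conjSub g H))
            ((c.rep.map (conjHom g H) : Subgroup (conjSub g H)) : Set (conjSub g H)),
          Finsupp.single
            (((conjSub (((Quotient.out r : conjSub g H) : G) * g) (c.rep.map H.subtype)).comap
                K.subtype).toConj) (1 : ℚ) := by
  rw [indF_single, resF_single, indF_smul]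
  congr 1
  unfold resBasis
  rw [indF_finset_sum]
  have e1 : (∑ q : DoubleCoset.Quotient
        (((Subgroup.inclusion (inf_le_right : K ⊓ conjSub g H ≤ conjSub g H)).range :
            Subgroup (conjSub g H)) : Set (conjSub g H))
        (((c.rep.map (conjHom g H)).toConj.rep : Subgroup (conjSub g H)) : Set (conjSub g H)),
        indF (Subgroup.inclusion (inf_le_left : K ⊓ conjSub g H ≤ K))
          (Finsupp.single
            (((conjSub (Quotient.out q) (c.rep.map (conjHom g H)).toConj.rep).comap
                (Subgroup.inclusion (inf_le_right : K ⊓ conjSub g H ≤ conjSub g H))).toConj)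
            (1 : ℚ)))
      = ∑ q : DoubleCoset.Quotient
        (((Subgroup.inclusion (inf_le_right : K ⊓ conjSub g H ≤ conjSub g H)).range :
            Subgroup (conjSub g H)) : Set (conjSub g H))
        (((c.rep.map (conjHom g H)).toConj.rep : Subgroup (conjSub g H)) : Set (conjSub g H)),
        Finsupp.single
          ((((conjSub (Quotient.out q) (c.rep.map (conjHom g H)).toConj.rep).comap
              (Subgroup.inclusion (inf_le_right : K ⊓ conjSub g H ≤ conjSub g H))).map
            (Subgroup.inclusion (inf_le_left : K ⊓ conjSub g H ≤ K))).toConj) (1 : ℚ) :=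
    Finset.sum_congr rfl fun q _ => by rw [indF_single, toConj_rep_map]
  rw [e1]
  obtain ⟨x, hx⟩ := rep_toConj (c.rep.map (conjHom g H))
  refine dosetSum_bij
    ((Subgroup.inclusion (inf_le_right : K ⊓ conjSub g H ≤ conjSub g H)).range)
    ((c.rep.map (conjHom g H)).toConj.rep)
    ((Subgroup.inclusion (inf_le_right : K ⊓ conjSub g H ≤ conjSub g H)).range)
    (c.rep.map (conjHom g H))
    (fun m => m * x)
    (fun m => Finsupp.single
      ((((conjSub m (c.rep.map (conjHom g H)).toConj.rep).comap
          (Subgroup.inclusion (inf_le_right : K ⊓ conjSub g H ≤ conjSub g H))).map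
        (Subgroup.inclusion (inf_le_left : K ⊓ conjSub g H ≤ K))).toConj) (1 : ℚ))
    (fun m => Finsupp.single
      (((conjSub ((m : G) * g) (c.rep.map H.subtype)).comap K.subtype).toConj) (1 : ℚ))
    ?_ ?_ ?_ ?_
  · intro m m'
    rw [DoubleCoset.eq, DoubleCoset.eq]
    constructor
    · rintro ⟨k, hk, γ, hγ, rfl⟩
      rw [hx, mem_conjSub] at hγ
      exact ⟨k, hk, x⁻¹ * γ * x, hγ, by group⟩
    · rintro ⟨k, hk, δ, hδ, heq⟩
      have hδ' : x * δ * x⁻¹ ∈ (c.rep.map (conjHom g H)).toConj.rep := by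
        rw [hx, mem_conjSub]
        have e : x⁻¹ * (x * δ * x⁻¹) * x = δ := by group
        rw [e]; exact hδ
      refine ⟨k, hk, x * δ * x⁻¹, hδ', ?_⟩
      calc m' = (m' * x) * x⁻¹ := by group
      _ = (k * (m * x) * δ) * x⁻¹ := by rw [heq]
      _ = k * m * (x * δ * x⁻¹) := by group
  · intro b
    exact ⟨b * x⁻¹, by rw [inv_mul_cancel_right]⟩
  · intro m m' h
    obtain ⟨σ, hσ, β, hβ, rfl⟩ := (DoubleCoset.eq _ _ m m').mp h
    refine congrArg (fun t => Finsupp.single t (1 : ℚ)) (fK_const K (c.rep.map H.subtype) _ _ ?_)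
    have hσK : (σ : G) ∈ K := (mem_inclusion_range inf_le_right σ).mp hσ
    have hβA : (β : G) ∈ conjSub g (c.rep.map H.subtype) := (mem_map_conjHom g H c.rep β).mp hβ
    refine (DoubleCoset.eq K (c.rep.map H.subtype) _ _).mpr
      ⟨(σ : G), hσK, g⁻¹ * (β : G) * g, mem_conjSub.mp hβA, ?_⟩
    push_cast
    group
  · intro m
    rw [hx, conjSub_conjSub, value_lemma K H g c.rep (m * x)]

end AuxTerm
/-- The Mackey double coset formula in Burnside rings:
`Res^G_K (Ind^G_H y) = Σ_{g ∈ K\G/H} Ind^K_{K ∩ gHg⁻¹} (Res^{gHg⁻¹}_{K ∩ gHg⁻¹} (c_g y))`. -/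
theorem burnside_mackey_formula (G : Type*) [Group G] [Finite G] (H K : Subgroup G)
    (y : BQ ↥H) :
    resF K.subtype (indF H.subtype y) =
      ∑ q : DoubleCoset.Quotient (K : Set G) (H : Set G),
        indF (Subgroup.inclusion
            (inf_le_left : K ⊓ conjSub (Quotient.out q) H ≤ K))
          (resF (Subgroup.inclusion
              (inf_le_right : K ⊓ conjSub (Quotient.out q) H ≤ conjSub (Quotient.out q) H))
            (indF (conjHom (Quotient.out q) H) y)) := by
  induction y using Finsupp.induction_linear with
  | zero =>
    simp only [indF_zero, resF_zero, Finset.sum_const_zero]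
  | add f g hf hg =>
    rw [indF_add, resF_add, hf, hg, ← Finset.sum_add_distrib]
    exact Finset.sum_congr rfl fun q _ => by
      rw [indF_add (conjHom (Quotient.out q) H) f g, resF_add, indF_add]
  | single c a =>
    have hterms : (∑ q : DoubleCoset.Quotient (K : Set G) (H : Set G),
        indF (Subgroup.inclusion
            (inf_le_left : K ⊓ conjSub (Quotient.out q) H ≤ K))
          (resF (Subgroup.inclusion
              (inf_le_right : K ⊓ conjSub (Quotient.out q) H ≤ conjSub (Quotient.out q) H))
            (indF (conjHom (Quotient.out q) H) (Finsupp.single c a))))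
        = ∑ q : DoubleCoset.Quotient (K : Set G) (H : Set G),
            a • ∑ r : DoubleCoset.Quotient
              (((Subgroup.inclusion (inf_le_right :
                  K ⊓ conjSub (Quotient.out q) H ≤ conjSub (Quotient.out q) H)).range :
                  Subgroup (conjSub (Quotient.out q) H)) : Set (conjSub (Quotient.out q) H))
              ((c.rep.map (conjHom (Quotient.out q) H) :
                  Subgroup (conjSub (Quotient.out q) H)) : Set (conjSub (Quotient.out q) H)),
              Finsupp.single
                (((conjSub (((Quotient.out r : conjSub (Quotient.out q) H) : G) * Quotient.out q)
                    (c.rep.map H.subtype)).comap K.subtype).toConj) (1 : ℚ) :=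
      Finset.sum_congr rfl fun q _ => rhs_term H K (Quotient.out q) c a
    rw [hterms, ← Finset.smul_sum]
    rw [mackey_core K H (c.rep.map H.subtype) (Subgroup.map_subtype_le _)
      (fun a' => Finsupp.single
        (((conjSub a' (c.rep.map H.subtype)).comap K.subtype).toConj) (1 : ℚ))
      (fun a' b' h => congrArg (fun t => Finsupp.single t (1 : ℚ))
        (fK_const K (c.rep.map H.subtype) a' b' h))
      (fun q => (Subgroup.inclusion (inf_le_right :
          K ⊓ conjSub (Quotient.out q) H ≤ conjSub (Quotient.out q) H)).range)
      (fun q => c.rep.map (conjHom (Quotient.out q) H))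
      (fun q m => mem_inclusion_range inf_le_right m)
      (fun q m => mem_map_conjHom (Quotient.out q) H c.rep m)]
    rw [indF_single, resF_single, resBasis_subtype]

end
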